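/- Let r ≥ 1, S ⊆ Fin r, and let {A,B} be a bipartition of Fin r. Suppose CZ_S disappears on ψ_A ⊗ ψ_B for some states ψ_A of the qubits in A and ψ_B of the qubits in B. Then either CZ_S disappears on ψ_A ⊗ φ_B for every state φ_B of the qubits in B, or CZ_S disappears on φ_A ⊗ ψ_B for every state φ_A of the qubits in A. -/
import Mathlib


open scoped BigOperators

/-- The state space of `r` qubits: amplitudes indexed by bit strings of length `r`. -/
abbrev QState (r : ℕ) := (Fin r → Bool) → ℂ

/-- A unit vector on qubits indexed by a finite type. -/
def UnitVecOn {α : Type*} [Fintype α] [DecidableEq α] (ψ : (α → Bool) → ℂ) : Prop :=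
  ∑ x, ‖ψ x‖ ^ 2 = 1

/-- The C-SIGN gate on the qubits in `S`: flips the sign of the amplitude exactly
when all bits in `S` are `1`. -/
noncomputable def czGate {r : ℕ} (S : Finset (Fin r)) (ψ : QState r) : QState r :=
  fun x => if ∀ i ∈ S, x i = true then -ψ x else ψ x

/-- `{A, B}` is a bipartition of the qubits. -/
def Bipartition {r : ℕ} (A B : Finset (Fin r)) : Prop :=
  A.Nonempty ∧ B.Nonempty ∧ Disjoint A B ∧ A ∪ B = Finset.univ

/-- The tensor product of a state on the qubits in `A` with a state on the qubits
in `B` (for `{A,B}` a bipartition of the register). -/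
noncomputable def tens {r : ℕ} (A B : Finset (Fin r))
    (ψA : ({i : Fin r // i ∈ A} → Bool) → ℂ) (ψB : ({i : Fin r // i ∈ B} → Bool) → ℂ) :
    QState r :=
  fun x => ψA (fun i => x i.1) * ψB (fun i => x i.1)

lemma cz_fix_iff {r : ℕ} (S : Finset (Fin r)) (ψ : QState r) :
    czGate S ψ = ψ ↔ ∀ x, (∀ i ∈ S, x i = true) → ψ x = 0 := by
  constructor
  · intro h x hx
    have := congrFun h x
    simp only [czGate, if_pos hx] at this
    have h2 : (2 : ℂ) * ψ x = 0 := by linear_combination -this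
    simpa using h2
  · intro h
    funext x
    by_cases hx : ∀ i ∈ S, x i = true
    · simp [czGate, hx, h x hx]
    · simp [czGate, hx]

theorem cz_disappears_one_side (r : ℕ) (hr : 1 ≤ r) (S : Finset (Fin r))
    (A B : Finset (Fin r)) (hAB : Bipartition A B)
    (ψA : ({i : Fin r // i ∈ A} → Bool) → ℂ) (hψA : UnitVecOn ψA)
    (ψB : ({i : Fin r // i ∈ B} → Bool) → ℂ) (hψB : UnitVecOn ψB)
    (h : czGate S (tens A B ψA ψB) = tens A B ψA ψB) :
    (∀ φB : ({i : Fin r // i ∈ B} → Bool) → ℂ, UnitVecOn φB →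
        czGate S (tens A B ψA φB) = tens A B ψA φB) ∨
    (∀ φA : ({i : Fin r // i ∈ A} → Bool) → ℂ, UnitVecOn φA →
        czGate S (tens A B φA ψB) = tens A B φA ψB) := by
  obtain ⟨-, -, hdisj, huniv⟩ := hAB
  have hmemB : ∀ i : Fin r, i ∉ A → i ∈ B := by
    intro i hi
    have : i ∈ A ∪ B := huniv ▸ Finset.mem_univ i
    rcases Finset.mem_union.mp this with h' | h'
    · exact absurd h' hi
    · exact h'
  have h0 := (cz_fix_iff S _).mp h
  by_cases hA : ∀ a : ({i : Fin r // i ∈ A} → Bool),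
      (∀ i : {i : Fin r // i ∈ A}, i.1 ∈ S → a i = true) → ψA a = 0
  · left
    intro φB _
    rw [cz_fix_iff]
    intro x hx
    have : ψA (fun i => x i.1) = 0 :=
      hA _ (fun i hi => hx i.1 hi)
    simp [tens, this]
  · right
    push_neg at hA
    obtain ⟨a, ha1, ha0⟩ := hA
    have hB : ∀ b : ({i : Fin r // i ∈ B} → Bool),
        (∀ i : {i : Fin r // i ∈ B}, i.1 ∈ S → b i = true) → ψB b = 0 := by
      intro b hb
      set x : Fin r → Bool := fun i =>
        if h' : i ∈ A then a ⟨i, h'⟩ else b ⟨i, hmemB i h'⟩ with hxdef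
      have hxA : (fun i : {i : Fin r // i ∈ A} => x i.1) = a := by
        funext i
        simp [hxdef, i.2]
      have hxB : (fun i : {i : Fin r // i ∈ B} => x i.1) = b := by
        funext i
        have hiA : i.1 ∉ A := Finset.disjoint_right.mp hdisj i.2
        simp [hxdef, hiA]
      have hx : ∀ i ∈ S, x i = true := by
        intro i hi
        by_cases h' : i ∈ A
        · simpa [hxdef, h'] using ha1 ⟨i, h'⟩ hi
        · simpa [hxdef, h'] using hb ⟨i, hmemB i h'⟩ hi
      have := h0 x hx
      rw [tens] at this
      rw [hxA, hxB] at this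
      rcases mul_eq_zero.mp this with h' | h'
      · exact absurd h' ha0
      · exact h'
    intro φA _
    rw [cz_fix_iff]
    intro x hx
    have : ψB (fun i => x i.1) = 0 := hB _ (fun i hi => hx i.1 hi)
    simp [tens, this]
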